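/- If a permutation π of [n] avoids 321, 2413 and 3142, then either π = id_r ⊕ π' for some 1 ≤ r ≤ n with π' avoiding these three patterns, or π = (id_{r1} ⊖ id_{r2}) ⊕ π'' with r1, r2 ≥ 1, r1 + r2 ≤ n, and π'' avoiding these three patterns. -/

import Mathlib

/-- `π` is (the one-line notation of) a permutation of `{1,…,n}`. -/
def IsPermList (n : ℕ) (π : List ℕ) : Prop := π.Perm (List.range' 1 n)

/-- Two sequences are order-isomorphic. -/
def OrdIso (u v : List ℕ) : Prop :=
  u.length = v.length ∧
    ∀ i j : ℕ, i < u.length → j < u.length → (u[i]! < u[j]! ↔ v[i]! < v[j]!)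

/-- `π` contains the pattern `σ`: some subsequence of `π` is order-isomorphic to `σ`. -/
def ContainsPat (π σ : List ℕ) : Prop := ∃ t : List ℕ, t.Sublist π ∧ OrdIso t σ

/-- `π` avoids the pattern `σ`. -/
def AvoidsPat (π σ : List ℕ) : Prop := ¬ ContainsPat π σ

/-- Direct sum of permutations in one-line notation. -/
def dsumL (x y : List ℕ) : List ℕ := x ++ y.map (· + x.length)

/-- Skew sum of permutations in one-line notation. -/
def ssumL (x y : List ℕ) : List ℕ := x.map (· + y.length) ++ y

/-- The identity permutation of size `r` in one-line notation. -/
def idL (r : ℕ) : List ℕ := List.range' 1 r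

/-- `π` avoids all of the patterns 321, 2413 and 3142. -/
def AvoidsAll (π : List ℕ) : Prop :=
  AvoidsPat π [3, 2, 1] ∧ AvoidsPat π [2, 4, 1, 3] ∧ AvoidsPat π [3, 1, 4, 2]

/- ### Auxiliary lemmas -/

lemma ordIso321 {x y z : ℕ} (h1 : z < y) (h2 : y < x) : OrdIso [x, y, z] [3, 2, 1] := by
  refine ⟨rfl, fun i j hi hj => ?_⟩
  simp only [List.length_cons, List.length_nil] at hi hj
  interval_cases i <;> interval_cases j <;> simp <;> omega

lemma ordIso2413 {a b c d : ℕ} (h1 : a < b) (h2 : b < c) (h3 : c < d) :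
    OrdIso [b, d, a, c] [2, 4, 1, 3] := by
  refine ⟨rfl, fun i j hi hj => ?_⟩
  simp only [List.length_cons, List.length_nil] at hi hj
  interval_cases i <;> interval_cases j <;> simp <;> omega

lemma ordIso3142 {a b c d : ℕ} (h1 : a < b) (h2 : b < c) (h3 : c < d) :
    OrdIso [c, a, d, b] [3, 1, 4, 2] := by
  refine ⟨rfl, fun i j hi hj => ?_⟩
  simp only [List.length_cons, List.length_nil] at hi hj
  interval_cases i <;> interval_cases j <;> simp <;> omega

/-- Avoidance transfers to a downward-shifted sublist. -/
lemma avoidsPat_map_sub {π s : List ℕ} {c : ℕ} (hs : s.Sublist π)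
    (hc : ∀ x ∈ s, c ≤ x) {σ : List ℕ} (h : AvoidsPat π σ) :
    AvoidsPat (s.map (· - c)) σ := by
  rintro ⟨t', ht', hlen, hiso⟩
  obtain ⟨t, hts, rfl⟩ := List.sublist_map_iff.1 ht'
  refine h ⟨t, hts.trans hs, ?_, ?_⟩
  · simpa using hlen
  · intro i j hi hj
    have hi' : i < (t.map (· - c)).length := by simpa using hi
    have hj' : j < (t.map (· - c)).length := by simpa using hj
    have key := hiso i j hi' hj'
    have e1 : (t.map (· - c))[i]! = t[i]! - c := by
      rw [getElem!_pos (t.map (· - c)) i hi', getElem!_pos t i hi, List.getElem_map]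
    have e2 : (t.map (· - c))[j]! = t[j]! - c := by
      rw [getElem!_pos (t.map (· - c)) j hj', getElem!_pos t j hj, List.getElem_map]
    have hci : c ≤ t[i]! := by
      rw [getElem!_pos t i hi]; exact hc _ (hts.subset (t.getElem_mem hi))
    have hcj : c ≤ t[j]! := by
      rw [getElem!_pos t j hj]; exact hc _ (hts.subset (t.getElem_mem hj))
    rw [e1, e2] at key
    omega

lemma avoidsAll_map_sub {π s : List ℕ} {c : ℕ} (hs : s.Sublist π)
    (hc : ∀ x ∈ s, c ≤ x) (h : AvoidsAll π) : AvoidsAll (s.map (· - c)) :=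
  ⟨avoidsPat_map_sub hs hc h.1, avoidsPat_map_sub hs hc h.2.1,
    avoidsPat_map_sub hs hc h.2.2⟩

/-- Split a list into a prefix satisfying `p` and a suffix satisfying `q`. -/
lemma split_list (p q : ℕ → Prop) : ∀ (S : List ℕ),
    (∀ x ∈ S, p x ∨ q x) →
    (∀ x y, [x, y].Sublist S → q x → p y → False) →
    ∃ S1 S2, S = S1 ++ S2 ∧ (∀ x ∈ S1, p x) ∧ (∀ x ∈ S2, q x) := by
  intro S
  induction S with
  | nil => exact fun _ _ => ⟨[], [], rfl, by simp, by simp⟩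
  | cons c S' ih =>
    intro hall hnoqp
    by_cases hp : p c
    · obtain ⟨S1, S2, hsplit, h1, h2⟩ := ih (fun x hx => hall x (List.mem_cons_of_mem c hx))
        (fun x y hxy => hnoqp x y (hxy.trans (List.sublist_cons_self c S')))
      refine ⟨c :: S1, S2, by simp [hsplit], ?_, h2⟩
      intro x hx
      rcases List.mem_cons.1 hx with rfl | hx'
      · exact hp
      · exact h1 x hx'
    · have hq : q c := (hall c List.mem_cons_self).resolve_left hp
      refine ⟨[], c :: S', by simp, by simp, ?_⟩
      intro x hx
      rcases List.mem_cons.1 hx with rfl | hx'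
      · exact hq
      · exact (hall x (List.mem_cons_of_mem c hx')).resolve_left fun hpx =>
          hnoqp c x ((List.singleton_sublist.2 hx').cons₂ c) hq hpx

/-- A strictly increasing list with interval membership is a `range'`. -/
lemma eq_range'_of_sorted {P : List ℕ} {s m : ℕ} (hP : P.Pairwise (· < ·))
    (hmem : ∀ v, v ∈ P ↔ s ≤ v ∧ v < s + m) : P = List.range' s m := by
  have h1 : P.Nodup := hP.imp ne_of_lt
  have h2 : (List.range' s m).Nodup := List.nodup_range'
  have hperm : P.Perm (List.range' s m) :=
    (List.perm_ext_iff_of_nodup h1 h2).2 (by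
      intro v; rw [hmem, List.mem_range'_1])
  exact (fun h x y => List.Perm.eq_of_pairwise' x y h) hperm (hP.imp le_of_lt)
    ((List.pairwise_lt_range' (s := s) (n := m)).imp le_of_lt)

lemma le_getLast_of_pairwise : ∀ {P : List ℕ} (h : P ≠ []),
    P.Pairwise (· < ·) → ∀ x ∈ P, x ≤ P.getLast h := by
  intro P
  induction P with
  | nil => simp
  | cons a P' ih =>
    intro h hp x hx
    rcases List.pairwise_cons.1 hp with ⟨ha, hp'⟩
    rcases eq_or_ne P' [] with rfl | hne
    · simp only [List.mem_singleton] at hx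
      simp [hx]
    · rw [List.getLast_cons hne]
      rcases List.mem_cons.1 hx with rfl | hx'
      · exact (ha _ (List.getLast_mem hne)).le
      · exact ih hne hp' x hx'

lemma map_sub_range' (c m k : ℕ) :
    (List.range' (c + k) m).map (· - c) = List.range' k m := by
  have h : List.range' (c + k) m = (List.range' k m).map (fun x => c + x) := by
    rw [List.map_add_range']
  rw [h, List.map_map]
  have h2 : ∀ x ∈ List.range' k m, ((· - c) ∘ (fun x => c + x)) x = id x := by
    intro x _
    simp only [Function.comp_apply, id_eq]
    omega
  rw [List.map_congr_left h2, List.map_id]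

/- ### Main theorem -/

/-- If a permutation of `[n]` avoids 321, 2413 and 3142, then either
`π = id_r ⊕ π'` with `1 ≤ r ≤ n` and `π'` avoiding the three patterns, or
`π = (id_{r1} ⊖ id_{r2}) ⊕ π''` with `r1, r2 ≥ 1`, `r1 + r2 ≤ n` and `π''`
avoiding the three patterns. -/
theorem avoids_decomposition_step (n : ℕ) (hn : 1 ≤ n) (π : List ℕ)
    (hπ : IsPermList n π) (hav : AvoidsAll π) :
    (∃ r π', 1 ≤ r ∧ r ≤ n ∧ IsPermList (n - r) π' ∧ AvoidsAll π' ∧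
      π = dsumL (idL r) π') ∨
    (∃ r1 r2 π'', 1 ≤ r1 ∧ 1 ≤ r2 ∧ r1 + r2 ≤ n ∧
      IsPermList (n - (r1 + r2)) π'' ∧ AvoidsAll π'' ∧
      π = dsumL (ssumL (idL r1) (idL r2)) π'') := by
  obtain ⟨hA321, hA2413, hA3142⟩ := hav
  have hnodup : π.Nodup := hπ.nodup_iff.2 List.nodup_range'
  have hmem : ∀ v, v ∈ π ↔ 1 ≤ v ∧ v < 1 + n := fun v => by
    rw [hπ.mem_iff, List.mem_range'_1]
  have h1π : (1 : ℕ) ∈ π := (hmem 1).2 ⟨le_refl 1, by omega⟩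
  obtain ⟨P, S, rfl⟩ := List.append_of_mem h1π
  rw [List.nodup_append] at hnodup
  obtain ⟨hPnd, hSnd', hdisj⟩ := hnodup
  have h1P : (1 : ℕ) ∉ P := fun h => hdisj 1 h 1 (by simp) rfl
  have h1S : (1 : ℕ) ∉ S := (List.nodup_cons.1 hSnd').1
  have hSnd : S.Nodup := (List.nodup_cons.1 hSnd').2
  have hmemP : ∀ x ∈ P, 1 < x ∧ x ≤ n := by
    intro x hx
    have := (hmem x).1 (by simp [hx])
    have hne : x ≠ 1 := fun h => h1P (h ▸ hx)
    omega
  have hmemS : ∀ x ∈ S, 1 < x ∧ x ≤ n := by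
    intro x hx
    have := (hmem x).1 (by simp [hx])
    have hne : x ≠ 1 := fun h => h1S (h ▸ hx)
    omega
  rcases eq_or_ne P [] with rfl | hPne
  · -- π = 1 :: S ; use branch 1 with r = 1
    left
    refine ⟨1, S.map (· - 1), le_refl 1, hn, ?_, ?_, ?_⟩
    · -- IsPermList (n-1)
      have hSmem : ∀ v, v ∈ S ↔ 2 ≤ v ∧ v < 2 + (n - 1) := by
        intro v
        constructor
        · intro hv; have := hmemS v hv; omega
        · intro hv
          have hvπ : v ∈ [] ++ 1 :: S := (hmem v).2 (by omega)
          simp only [List.nil_append, List.mem_cons] at hvπ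
          rcases hvπ with rfl | hv'
          · omega
          · exact hv'
      have hSperm : S.Perm (List.range' 2 (n - 1)) :=
        (List.perm_ext_iff_of_nodup hSnd List.nodup_range').2 (by
          intro v; rw [hSmem, List.mem_range'_1])
      have := hSperm.map (· - 1)
      rwa [show (2 : ℕ) = 1 + 1 from rfl, map_sub_range' 1 (n - 1) 1] at this
    · -- AvoidsAll
      exact avoidsAll_map_sub (by simp) (fun x hx => (hmemS x hx).1.le)
        ⟨hA321, hA2413, hA3142⟩
    · -- equality
      have h1 : idL 1 = [1] := by simp [idL]
      rw [dsumL, h1]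
      simp only [List.length_cons, List.length_nil, List.map_map, List.nil_append]
      show (1 : ℕ) :: S = 1 :: S.map ((· + 1) ∘ (· - 1))
      congr 1
      conv_lhs => rw [← List.map_id S]
      refine List.map_congr_left fun x hx => ?_
      have := hmemS x hx
      simp only [Function.comp_apply, id_eq]
      omega
  · right
    -- P is strictly increasing
    have hPinc : P.Pairwise (· < ·) := by
      rw [List.pairwise_iff_forall_sublist]
      intro x y hxy
      by_contra hlt
      have hxney : x ≠ y := List.pairwise_iff_forall_sublist.1 hPnd hxy
      have hyx : y < x := by omega
      have hy1 : 1 < y := (hmemP y (hxy.subset (by simp))).1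
      have hsub : [x, y, 1].Sublist (P ++ 1 :: S) :=
        List.Sublist.append hxy (by simp)
      exact hA321 ⟨[x, y, 1], hsub, ordIso321 hy1 hyx⟩
    set a := P.head hPne with hadef
    set b := P.getLast hPne with hbdef
    have hPcons : a :: P.tail = P := List.cons_head_tail hPne
    have haP : a ∈ P := List.head_mem hPne
    have hbP : b ∈ P := List.getLast_mem hPne
    have ha2 : 2 ≤ a := (hmemP a haP).1
    have hbn : b ≤ n := (hmemP b hbP).2
    have hle_b : ∀ x ∈ P, x ≤ b := le_getLast_of_pairwise hPne hPinc
    have ha_le : ∀ x ∈ P, a ≤ x := by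
      intro x hx
      rw [← hPcons] at hx
      rcases List.mem_cons.1 hx with rfl | hx'
      · exact le_refl _
      · have hp' := hPinc
        rw [← hPcons] at hp'
        exact ((List.pairwise_cons.1 hp').1 x hx').le
    have hab : a ≤ b := hle_b a haP
    -- [a, b] is a sublist of P when a < b
    have habsub : a < b → [a, b].Sublist P := by
      intro hlt
      have hbtail : b ∈ P.tail := by
        have hbP' := hbP
        rw [← hPcons] at hbP'
        rcases List.mem_cons.1 hbP' with h | h
        · omega
        · exact h
      rw [← hPcons]
      exact (List.singleton_sublist.2 hbtail).cons₂ _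
    -- P is exactly the interval [a, b]
    have hPmem : ∀ v, v ∈ P ↔ a ≤ v ∧ v ≤ b := by
      intro v
      constructor
      · exact fun hv => ⟨ha_le v hv, hle_b v hv⟩
      · rintro ⟨h1, h2⟩
        by_contra hv
        have hva : a < v := lt_of_le_of_ne h1 (fun h => hv (h ▸ haP))
        have hvb : v < b := lt_of_le_of_ne h2 (fun h => hv (h ▸ hbP))
        have hvπ : v ∈ P ++ 1 :: S := (hmem v).2 ⟨by omega, by omega⟩
        have hvS : v ∈ S := by
          rcases List.mem_append.1 hvπ with h | h
          · exact absurd h hv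
          · rcases List.mem_cons.1 h with rfl | h'
            · omega
            · exact h'
        have hsub : [a, b, 1, v].Sublist (P ++ 1 :: S) :=
          List.Sublist.append (habsub (by omega)) ((List.singleton_sublist.2 hvS).cons₂ 1)
        exact hA2413 ⟨[a, b, 1, v], hsub, ordIso2413 (by omega : 1 < a) hva hvb⟩
    have hPeq : P = List.range' a (b - a + 1) :=
      eq_range'_of_sorted hPinc (by intro v; rw [hPmem]; omega)
    -- every element of S is < a or > b
    have hSsmall : ∀ x ∈ S, x < a ∨ b < x := by
      intro x hx
      have hxP : x ∉ P := fun h => hdisj x h x (by simp [hx]) rfl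
      have := (hPmem x).not.1 hxP
      omega
    -- no big element before a small one
    have hnoqp : ∀ x y, [x, y].Sublist S → b < x → y < a → False := by
      intro x y hxy hbx hya
      have hy1 : 1 < y := (hmemS y (hxy.subset (by simp))).1
      have hsub : [a, 1, x, y].Sublist (P ++ 1 :: S) := by
        have := List.Sublist.append (l₁ := [a]) (List.singleton_sublist.2 haP)
          (hxy.cons₂ 1)
        simpa using this
      exact hA3142 ⟨[a, 1, x, y], hsub, ordIso3142 hy1 hya (by omega : a < x)⟩
    obtain ⟨S1, S2, hSsplit, hS1, hS2⟩ := split_list (· < a) (b < ·) S hSsmall hnoqp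
    have hS1sub : S1.Sublist S := hSsplit ▸ List.sublist_append_left S1 S2
    have hS2sub : S2.Sublist S := hSsplit ▸ List.sublist_append_right S1 S2
    -- S1 is strictly increasing
    have hS1inc : S1.Pairwise (· < ·) := by
      rw [List.pairwise_iff_forall_sublist]
      intro x y hxy
      by_contra hlt
      have hxney : x ≠ y :=
        List.pairwise_iff_forall_sublist.1 (hSnd.sublist hS1sub) hxy
      have hyx : y < x := by omega
      have hxa : x < a := hS1 x (hxy.subset (by simp))
      have hsub : [a, x, y].Sublist (P ++ 1 :: S) := by
        have := List.Sublist.append (l₁ := [a]) (List.singleton_sublist.2 haP)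
          (((hxy.trans hS1sub).trans (List.sublist_cons_self 1 S)))
        simpa using this
      exact hA321 ⟨[a, x, y], hsub, ordIso321 hyx hxa⟩
    have hS1mem : ∀ v, v ∈ S1 ↔ 2 ≤ v ∧ v < 2 + (a - 2) := by
      intro v
      constructor
      · intro hv
        have h1 := (hmemS v (hS1sub.subset hv)).1
        have h2 := hS1 v hv
        omega
      · intro hv
        have hvπ : v ∈ P ++ 1 :: S := (hmem v).2 ⟨by omega, by omega⟩
        have hvP : v ∉ P := by rw [hPmem]; omega
        have hvS : v ∈ S := by
          rcases List.mem_append.1 hvπ with h | h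
          · exact absurd h hvP
          · rcases List.mem_cons.1 h with rfl | h'
            · omega
            · exact h'
        rw [hSsplit] at hvS
        rcases List.mem_append.1 hvS with h | h
        · exact h
        · have := hS2 v h
          omega
    have hS1eq : S1 = List.range' 2 (a - 2) :=
      eq_range'_of_sorted hS1inc hS1mem
    -- S2
    have hS2mem : ∀ v, v ∈ S2 ↔ b + 1 ≤ v ∧ v < b + 1 + (n - b) := by
      intro v
      constructor
      · intro hv
        have h1 := (hmemS v (hS2sub.subset hv)).2
        have h2 := hS2 v hv
        omega
      · intro hv
        have hvπ : v ∈ P ++ 1 :: S := (hmem v).2 ⟨by omega, by omega⟩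
        have hvP : v ∉ P := by rw [hPmem]; omega
        have hvS : v ∈ S := by
          rcases List.mem_append.1 hvπ with h | h
          · exact absurd h hvP
          · rcases List.mem_cons.1 h with rfl | h'
            · omega
            · exact h'
        rw [hSsplit] at hvS
        rcases List.mem_append.1 hvS with h | h
        · have := hS1 v h
          omega
        · exact h
    have hS2perm : S2.Perm (List.range' (b + 1) (n - b)) :=
      (List.perm_ext_iff_of_nodup (hSnd.sublist hS2sub) List.nodup_range').2 (by
        intro v; rw [hS2mem, List.mem_range'_1])
    refine ⟨b - a + 1, a - 1, S2.map (· - b), by omega, by omega, by omega, ?_, ?_, ?_⟩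
    · -- IsPermList
      have hsum : (b - a + 1) + (a - 1) = b := by omega
      rw [hsum]
      have := hS2perm.map (· - b)
      rwa [map_sub_range' b (n - b) 1] at this
    · -- AvoidsAll
      refine avoidsAll_map_sub (hS2sub.trans ?_) (fun x hx => (hS2 x hx).le)
        ⟨hA321, hA2413, hA3142⟩
      exact (List.sublist_cons_self 1 S).trans (List.sublist_append_right P (1 :: S))
    · -- equality
      have hlen : (ssumL (idL (b - a + 1)) (idL (a - 1))).length = b := by
        simp [ssumL, idL]
        omega
      rw [dsumL, hlen, ssumL, idL, idL]
      have hmap1 : (List.range' 1 (b - a + 1)).map (· + (List.range' 1 (a - 1)).length)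
          = List.range' a (b - a + 1) := by
        simp only [List.length_range']
        have he : ((· + (a - 1)) : ℕ → ℕ) = (fun x => (a - 1) + x) := by
          funext x; omega
        rw [he, List.map_add_range']
        congr 1
        omega
      have hmap2 : (S2.map (· - b)).map (· + b) = S2 := by
        rw [List.map_map]
        conv_rhs => rw [← List.map_id S2]
        refine List.map_congr_left fun x hx => ?_
        have := hS2 x hx
        simp only [Function.comp_apply, id_eq]
        omega
      have hrange : List.range' 1 (a - 1) = 1 :: List.range' 2 (a - 2) := by
        have h : a - 1 = (a - 2) + 1 := by omega
        rw [h, List.range'_succ]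
      rw [hmap1, hmap2, hrange, hPeq, hSsplit, hS1eq]
      simp
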